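/- Let L ≥ 1, A_l ≥ 2 for all l, n ≥ 1, (K,S) ∈ 𝕄, and let either (Case 1) η(ε) = (1+ε)^{L+1} − 1 or (Case 2) η(ε) = (1+ε)·(1 + 2√2 ε + √2 ε²)^L − 1. Suppose σ ∈ (0, η(1)] satisfies φ_{(K,S)}(σ) = √n·σ². Then σ² + (ln 2)·D_{(K,S)}/n ≤ (D_{(K,S)}/n)·(5 + √(max(½ ln n + ½ ln L, (ln 2)/2 + ln L)))². -/

import Mathlib

open Real BigOperators

noncomputable section

/-- The collection 𝕄 of model indices `(K, S)`. -/
def Mset (L : ℕ) : Set (ℕ × Finset (Fin L)) :=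
  {p | (p.1 = 1 ∧ p.2 = ∅) ∨ (2 ≤ p.1 ∧ p.2.Nonempty)}

/-- Dimension `D_{(K,S)}` of the model `M_{(K,S)}`. -/
def Dks {L : ℕ} (A : Fin L → ℕ) (K : ℕ) (S : Finset (Fin L)) : ℕ :=
  (K - 1) + K * ∑ l ∈ S, (A l - 1) + ∑ l ∈ Sᶜ, (A l - 1)

/-- The complexity constant `C_{(K,S)}`. -/
def Cks {L : ℕ} (A : Fin L → ℕ) (K : ℕ) (S : Finset (Fin L)) : ℝ :=
  (Real.log (2 * Real.pi * Real.exp 1) * (Dks A K S : ℝ)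
    + Real.log (4 * Real.pi * Real.exp 1)
        * ((if 2 ≤ K then (1 : ℝ) else 0) + (L : ℝ) + ((K : ℝ) - 1) * (S.card : ℝ))
    + (if 2 ≤ K then Real.log ((K : ℝ) + 1) else 0)
    + ∑ l, Real.log ((A l : ℝ) + 1)
    + ((K : ℝ) - 1) * ∑ l ∈ S, Real.log ((A l : ℝ) + 1)) / 2

/-- The function `η` of Case 1. -/
def etaCase1 (L : ℕ) (x : ℝ) : ℝ := (1 + x) ^ (L + 1) - 1

/-- The function `η` of Case 2. -/
def etaCase2 (L : ℕ) (x : ℝ) : ℝ :=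
  (1 + x) * (1 + 2 * Real.sqrt 2 * x + Real.sqrt 2 * x ^ 2) ^ L - 1

/-- The function `φ_{(K,S)}`, written in terms of the inverse `g` of `η`. -/
def phiKS {L : ℕ} (A : Fin L → ℕ) (K : ℕ) (S : Finset (Fin L)) (g : ℝ → ℝ) (σ : ℝ) : ℝ :=
  (2 * Real.sqrt (Real.log 2) * Real.sqrt (Dks A K S)
    + Real.sqrt (Cks A K S - (Dks A K S : ℝ) * Real.log (g σ))) * σ

/- ### Auxiliary lemmas -/


lemma nat_pow_aux : ∀ m : ℕ, 1 ≤ m → m + 2 ≤ 4 ^ m := by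
  intro m hm
  induction m with
  | zero => omega
  | succ k ih =>
    rcases Nat.eq_or_lt_of_le hm with h | h
    · simp [← h]
    · have hk : 1 ≤ k := by omega
      have h1 := ih hk
      have h2 : 1 ≤ 4 ^ k := Nat.one_le_pow _ _ (by norm_num)
      calc k + 1 + 2 ≤ 4 ^ k + 1 := by omega
        _ ≤ 4 ^ k + 4 ^ k * 3 := by omega
        _ = 4 ^ (k + 1) := by ring

lemma log_succ_le {m : ℕ} (hm : 2 ≤ m) : Real.log (m + 1) ≤ 2 * Real.log 2 * ((m:ℝ) - 1) := by
  have h1 : (m:ℝ) + 1 ≤ (4:ℝ) ^ (m - 1) := by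
    have h := nat_pow_aux (m - 1) (by omega)
    have h2 : (m - 1) + 2 = m + 1 := by omega
    rw [h2] at h
    exact_mod_cast h
  have h3 : Real.log ((m:ℝ) + 1) ≤ Real.log ((4:ℝ) ^ (m-1)) :=
    Real.log_le_log (by positivity) h1
  rw [Real.log_pow] at h3
  have h4 : Real.log 4 = 2 * Real.log 2 := by
    rw [show (4:ℝ) = 2^2 by norm_num, Real.log_pow]; push_cast; ring
  have h5 : ((m - 1 : ℕ) : ℝ) = (m:ℝ) - 1 := by
    have : 1 ≤ m := by omega
    push_cast [Nat.cast_sub this]; ring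
  rw [h4, h5] at h3
  linarith

lemma card_le_sum' {L : ℕ} (A : Fin L → ℕ) (hA : ∀ l, 2 ≤ A l) (T : Finset (Fin L)) :
    T.card ≤ ∑ l ∈ T, (A l - 1) := by
  calc T.card = ∑ _l ∈ T, 1 := by simp
    _ ≤ ∑ l ∈ T, (A l - 1) := Finset.sum_le_sum (fun l _ => by have := hA l; omega)

lemma sum_cast {L : ℕ} (A : Fin L → ℕ) (hA : ∀ l, 2 ≤ A l) (T : Finset (Fin L)) :
    ((∑ l ∈ T, (A l - 1) : ℕ) : ℝ) = ∑ l ∈ T, ((A l : ℝ) - 1) := by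
  rw [Nat.cast_sum]
  exact Finset.sum_congr rfl fun l _ => by
    have := hA l
    push_cast [Nat.cast_sub (by omega : 1 ≤ A l)]
    ring

lemma dks_cast {L : ℕ} (A : Fin L → ℕ) (hA : ∀ l, 2 ≤ A l) (K : ℕ) (S : Finset (Fin L))
    (hK : 1 ≤ K) :
    ((Dks A K S : ℕ) : ℝ)
      = ((K:ℝ) - 1) + (K:ℝ) * ∑ l ∈ S, ((A l:ℝ) - 1) + ∑ l ∈ Sᶜ, ((A l:ℝ) - 1) := by
  unfold Dks
  push_cast [Nat.cast_sub hK, sum_cast A hA]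
  ring

lemma dks_ge_L {L : ℕ} (A : Fin L → ℕ) (hA : ∀ l, 2 ≤ A l) (K : ℕ) (S : Finset (Fin L))
    (hK : 1 ≤ K) : L ≤ Dks A K S := by
  have h1 := card_le_sum' A hA S
  have h2 := card_le_sum' A hA Sᶜ
  have h3 : S.card + Sᶜ.card = L := by rw [Finset.card_add_card_compl]; simp
  have h4 : 1 * ∑ l ∈ S, (A l - 1) ≤ K * ∑ l ∈ S, (A l - 1) :=
    Nat.mul_le_mul_right _ hK
  unfold Dks
  omega

lemma mset_card_le {L : ℕ} (A : Fin L → ℕ) (hA : ∀ l, 2 ≤ A l) (K : ℕ) (S : Finset (Fin L))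
    (hK : 1 ≤ K) :
    (if 2 ≤ K then 1 else 0) + L + (K - 1) * S.card ≤ Dks A K S := by
  have h1 := card_le_sum' A hA S
  have h2 := card_le_sum' A hA Sᶜ
  have h3 : S.card + Sᶜ.card = L := by rw [Finset.card_add_card_compl]; simp
  have h4 : K * S.card ≤ K * ∑ l ∈ S, (A l - 1) := Nat.mul_le_mul_left _ h1
  have h5 : (K - 1) * S.card + S.card = K * S.card := by
    rcases K with _ | k
    · omega
    · simp only [Nat.succ_sub_one]; ring
  unfold Dks
  split <;> omega

lemma cks_le {L : ℕ} (A : Fin L → ℕ) (hA : ∀ l, 2 ≤ A l) (K : ℕ) (S : Finset (Fin L))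
    (hK : 1 ≤ K) :
    Cks A K S ≤ (5.5 * Real.log 2 + 1) * (Dks A K S : ℝ) := by
  have hlog2 : (0:ℝ) ≤ Real.log 2 := Real.log_nonneg one_le_two
  have hD0 : (0:ℝ) ≤ (Dks A K S : ℝ) := Nat.cast_nonneg _
  have hDc := dks_cast A hA K S hK
  have hpi : Real.log Real.pi ≤ 2 * Real.log 2 := by
    have h4 : Real.log 4 = 2 * Real.log 2 := by
      rw [show (4:ℝ) = 2^2 by norm_num, Real.log_pow]; push_cast; ring
    rw [← h4]
    exact Real.log_le_log Real.pi_pos Real.pi_le_four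
  have h2pe : Real.log (2 * Real.pi * Real.exp 1) ≤ 3 * Real.log 2 + 1 := by
    rw [Real.log_mul (by positivity) (Real.exp_pos 1).ne',
        Real.log_mul (by norm_num) Real.pi_pos.ne', Real.log_exp]
    linarith
  have h4pe : Real.log (4 * Real.pi * Real.exp 1) ≤ 4 * Real.log 2 + 1 := by
    rw [Real.log_mul (by positivity) (Real.exp_pos 1).ne',
        Real.log_mul (by norm_num) Real.pi_pos.ne', Real.log_exp,
        show (4:ℝ) = 2^2 by norm_num, Real.log_pow]
    push_cast; linarith
  have h4pe0 : (0:ℝ) ≤ Real.log (4 * Real.pi * Real.exp 1) := by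
    apply Real.log_nonneg
    nlinarith [Real.pi_gt_three, Real.exp_one_gt_d9]
  have hB : ((if 2 ≤ K then (1:ℝ) else 0) + (L : ℝ) + ((K:ℝ) - 1) * (S.card : ℝ))
      ≤ (Dks A K S : ℝ) := by
    have h := mset_card_le A hA K S hK
    have h' := (Nat.cast_le (α := ℝ)).mpr h
    push_cast [Nat.cast_sub hK] at h'
    split at h' <;> split <;> simp_all <;> linarith
  have hB0 : (0:ℝ) ≤ ((if 2 ≤ K then (1:ℝ) else 0) + (L : ℝ) + ((K:ℝ) - 1) * (S.card : ℝ)) := by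
    have hK' : (1:ℝ) ≤ (K:ℝ) := by exact_mod_cast hK
    have h1 : (0:ℝ) ≤ ((K:ℝ) - 1) * (S.card : ℝ) :=
      mul_nonneg (by linarith) (Nat.cast_nonneg _)
    have h2 : (0:ℝ) ≤ (L:ℝ) := Nat.cast_nonneg _
    split <;> linarith
  have hKD : ((K:ℝ) - 1) ≤ (Dks A K S : ℝ) := by
    have h : K - 1 ≤ Dks A K S := by unfold Dks; omega
    have h' := (Nat.cast_le (α := ℝ)).mpr h
    push_cast [Nat.cast_sub hK] at h'
    linarith
  have h3 : (if 2 ≤ K then Real.log ((K:ℝ) + 1) else 0) ≤ 2 * Real.log 2 * (Dks A K S : ℝ) := by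
    split
    · next h =>
      calc Real.log ((K:ℝ) + 1) ≤ 2 * Real.log 2 * ((K:ℝ) - 1) := log_succ_le h
        _ ≤ 2 * Real.log 2 * (Dks A K S : ℝ) := by nlinarith
    · positivity
  have hsum : ∀ T : Finset (Fin L), ∑ l ∈ T, Real.log ((A l : ℝ) + 1)
      ≤ 2 * Real.log 2 * ∑ l ∈ T, ((A l : ℝ) - 1) := by
    intro T
    rw [Finset.mul_sum]
    exact Finset.sum_le_sum fun l _ => log_succ_le (hA l)
  have hsumnn : ∀ T : Finset (Fin L), (0:ℝ) ≤ ∑ l ∈ T, Real.log ((A l : ℝ) + 1) := by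
    intro T
    exact Finset.sum_nonneg fun l _ => Real.log_nonneg (by have := hA l; push_cast; linarith)
  have hsplit : ∑ l, Real.log ((A l : ℝ) + 1)
      = ∑ l ∈ S, Real.log ((A l : ℝ) + 1) + ∑ l ∈ Sᶜ, Real.log ((A l : ℝ) + 1) :=
    (Finset.sum_add_sum_compl S _).symm
  have hK' : (1:ℝ) ≤ (K:ℝ) := by exact_mod_cast hK
  have h5 : ∑ l, Real.log ((A l : ℝ) + 1)
        + ((K:ℝ) - 1) * ∑ l ∈ S, Real.log ((A l : ℝ) + 1)
      ≤ 2 * Real.log 2 * (Dks A K S : ℝ) := by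
    rw [hsplit]
    have hS := hsum S
    have hSc := hsum Sᶜ
    have hSnn := hsumnn S
    have hsum_nn : (0:ℝ) ≤ ∑ l ∈ S, ((A l : ℝ) - 1) := by
      apply Finset.sum_nonneg; intro l _
      have h2 : (2:ℝ) ≤ (A l : ℝ) := by exact_mod_cast hA l
      linarith
    rw [hDc]
    nlinarith
  have hT1 : Real.log (2 * Real.pi * Real.exp 1) * (Dks A K S : ℝ)
      ≤ (3 * Real.log 2 + 1) * (Dks A K S : ℝ) :=
    mul_le_mul_of_nonneg_right h2pe hD0
  have hT2 : Real.log (4 * Real.pi * Real.exp 1)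
        * ((if 2 ≤ K then (1:ℝ) else 0) + (L : ℝ) + ((K:ℝ) - 1) * (S.card : ℝ))
      ≤ (4 * Real.log 2 + 1) * (Dks A K S : ℝ) :=
    mul_le_mul h4pe hB hB0 (by positivity)
  unfold Cks
  linarith

lemma final_numeric (b m l2 : ℝ) (hb0 : 0 ≤ b) (hb : b ≤ 4.55) (hm : 0 ≤ m)
    (hl2 : l2 ≤ 0.7) : (b + m) ^ 2 + l2 ≤ (5 + m) ^ 2 := by
  nlinarith [mul_nonneg (sub_nonneg.mpr hb) hm, mul_le_mul hb hb hb0 (by norm_num : (0:ℝ) ≤ 4.55)]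

lemma sqrt_add_le' (a b : ℝ) : Real.sqrt (a + b) ≤ Real.sqrt a + Real.sqrt b := by
  rcases le_or_gt a 0 with ha | ha
  · calc Real.sqrt (a + b) ≤ Real.sqrt b := Real.sqrt_le_sqrt (by linarith)
      _ ≤ Real.sqrt a + Real.sqrt b := by linarith [Real.sqrt_nonneg a]
  rcases le_or_gt b 0 with hb | hb
  · calc Real.sqrt (a + b) ≤ Real.sqrt a := Real.sqrt_le_sqrt (by linarith)
      _ ≤ Real.sqrt a + Real.sqrt b := by linarith [Real.sqrt_nonneg b]
  have h1 : a + b ≤ (Real.sqrt a + Real.sqrt b) ^ 2 := by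
    have ea : Real.sqrt a ^ 2 = a := Real.sq_sqrt ha.le
    have eb : Real.sqrt b ^ 2 = b := Real.sq_sqrt hb.le
    nlinarith [Real.sqrt_nonneg a, Real.sqrt_nonneg b]
  calc Real.sqrt (a + b) ≤ Real.sqrt ((Real.sqrt a + Real.sqrt b) ^ 2) := Real.sqrt_le_sqrt h1
    _ = Real.sqrt a + Real.sqrt b := Real.sqrt_sq (by positivity)

lemma eta_exp_bound {L : ℕ} (hL : 1 ≤ L) (η : ℝ → ℝ)
    (hcase : η = etaCase1 L ∨ η = etaCase2 L)
    (x : ℝ) (hx0 : 0 ≤ x) (hx1 : x ≤ 1) :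
    η x + 1 ≤ Real.exp (16 * (L:ℝ) * x) := by
  have hLR : (1:ℝ) ≤ (L:ℝ) := by exact_mod_cast hL
  rcases hcase with h | h
  · subst h
    unfold etaCase1
    have h1 : (1 + x) ^ (L + 1) ≤ Real.exp x ^ (L + 1) :=
      pow_le_pow_left₀ (by linarith) (by linarith [Real.add_one_le_exp x]) _
    have h2 : Real.exp x ^ (L + 1) = Real.exp (((L:ℝ) + 1) * x) := by
      rw [← Real.exp_nat_mul]
      push_cast; ring_nf
    have h3 : ((L:ℝ) + 1) * x ≤ 16 * (L:ℝ) * x := by nlinarith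
    have h4 := Real.exp_le_exp.mpr h3
    linarith [h1, h2 ▸ h1]
  · subst h
    unfold etaCase2
    have hs2 : Real.sqrt 2 ≤ 1.5 := by
      rw [show (1.5:ℝ) = Real.sqrt (1.5 ^ 2) by rw [Real.sqrt_sq]; norm_num]
      exact Real.sqrt_le_sqrt (by norm_num)
    have hs2' : (0:ℝ) ≤ Real.sqrt 2 := Real.sqrt_nonneg 2
    have hxx : x ^ 2 ≤ x := by nlinarith
    have hbase : 1 + 2 * Real.sqrt 2 * x + Real.sqrt 2 * x ^ 2 ≤ Real.exp (4.5 * x) := by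
      have : 1 + 2 * Real.sqrt 2 * x + Real.sqrt 2 * x ^ 2 ≤ 1 + 4.5 * x := by nlinarith
      linarith [Real.add_one_le_exp (4.5 * x)]
    have hbase0 : (0:ℝ) ≤ 1 + 2 * Real.sqrt 2 * x + Real.sqrt 2 * x ^ 2 := by positivity
    have h1 : (1 + 2 * Real.sqrt 2 * x + Real.sqrt 2 * x ^ 2) ^ L ≤ Real.exp (4.5 * x) ^ L :=
      pow_le_pow_left₀ hbase0 hbase _
    have h2 : (1 + x) * (1 + 2 * Real.sqrt 2 * x + Real.sqrt 2 * x ^ 2) ^ L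
        ≤ Real.exp x * Real.exp (4.5 * x) ^ L := by
      apply mul_le_mul (by linarith [Real.add_one_le_exp x]) h1 (by positivity)
        (Real.exp_pos x).le
    have h3 : Real.exp x * Real.exp (4.5 * x) ^ L = Real.exp (x + (L:ℝ) * (4.5 * x)) := by
      rw [← Real.exp_nat_mul, ← Real.exp_add]
    have h4 : x + (L:ℝ) * (4.5 * x) ≤ 16 * (L:ℝ) * x := by nlinarith
    have h5 := Real.exp_le_exp.mpr h4
    rw [h3] at h2
    linarith

set_option maxHeartbeats 1000000 in
/-- **Lemma 9 (the penalty bound).** If `σ ∈ (0, η(1)]` satisfies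
`φ_{(K,S)}(σ) = √n σ²` then
`σ² + (ln 2) D_{(K,S)}/n ≤ (D_{(K,S)}/n) (5 + √(max(½ ln n + ½ ln L, (ln 2)/2 + ln L)))²`. -/
theorem penalty_bound (L : ℕ) (hL : 1 ≤ L) (A : Fin L → ℕ) (hA : ∀ l, 2 ≤ A l)
    (n : ℕ) (hn : 1 ≤ n) (K : ℕ) (S : Finset (Fin L)) (hm : (K, S) ∈ Mset L)
    (η : ℝ → ℝ) (hcase : η = etaCase1 L ∨ η = etaCase2 L)
    -- `g` is the inverse function of `η`
    (g : ℝ → ℝ)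
    (hg1 : ∀ x ∈ Set.Icc (0 : ℝ) 1, g (η x) = x)
    (hg2 : ∀ y ∈ Set.Icc 0 (η 1), g y ∈ Set.Icc (0 : ℝ) 1 ∧ η (g y) = y)
    (σ : ℝ) (hσ : σ ∈ Set.Ioc (0 : ℝ) (η 1))
    (heq : phiKS A K S g σ = Real.sqrt n * σ ^ 2) :
    σ ^ 2 + Real.log 2 * (Dks A K S : ℝ) / n ≤
      ((Dks A K S : ℝ) / n) *
        (5 + Real.sqrt (max (Real.log n / 2 + Real.log L / 2)
          (Real.log 2 / 2 + Real.log L))) ^ 2 := by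
  obtain ⟨hσ0, hσ1⟩ := hσ
  have hK1 : 1 ≤ K := by
    simp only [Mset, Set.mem_setOf_eq] at hm
    rcases hm with ⟨h, _⟩ | ⟨h, _⟩ <;> omega
  have hDL : L ≤ Dks A K S := dks_ge_L A hA K S hK1
  set D : ℝ := (Dks A K S : ℝ) with hDdef
  set C : ℝ := Cks A K S with hCdef
  set Mx : ℝ := max (Real.log n / 2 + Real.log L / 2) (Real.log 2 / 2 + Real.log L) with hMxdef
  have hLR : (1:ℝ) ≤ (L:ℝ) := by exact_mod_cast hL
  have hnR : (1:ℝ) ≤ (n:ℝ) := by exact_mod_cast hn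
  have hDLR : (L:ℝ) ≤ D := by rw [hDdef]; exact_mod_cast hDL
  have hD1 : (1:ℝ) ≤ D := le_trans hLR hDLR
  have hD0 : (0:ℝ) ≤ D := by linarith
  have hDpos : (0:ℝ) < D := by linarith
  have hnpos : (0:ℝ) < (n:ℝ) := by linarith
  have hlog2pos : (0:ℝ) < Real.log 2 := Real.log_pos one_lt_two
  have hlog2lt : Real.log 2 < 0.6931471808 := Real.log_two_lt_d9
  have hlog2gt : (0.6931471803:ℝ) < Real.log 2 := Real.log_two_gt_d9
  have hlogL0 : (0:ℝ) ≤ Real.log L := Real.log_nonneg hLR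
  have hlogn0 : (0:ℝ) ≤ Real.log n := Real.log_nonneg hnR
  have hlogLD : Real.log L ≤ Real.log D := Real.log_le_log (by linarith) hDLR
  -- the inverse point x = g σ
  obtain ⟨hx01, hxeq⟩ := hg2 σ ⟨hσ0.le, hσ1⟩
  set x : ℝ := g σ with hxdef
  have hx0 : (0:ℝ) ≤ x := hx01.1
  have hx1 : x ≤ 1 := hx01.2
  have hη0 : η 0 = 0 := by rcases hcase with h | h <;> simp [h, etaCase1, etaCase2]
  have hxpos : (0:ℝ) < x := by
    rcases eq_or_lt_of_le hx0 with h | h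
    · exfalso; rw [← h] at hxeq; rw [hη0] at hxeq; linarith
    · exact h
  -- rearrange the fixed point equation
  have heq' : Real.sqrt n * σ
      = 2 * Real.sqrt (Real.log 2) * Real.sqrt D + Real.sqrt (C - D * Real.log x) := by
    have h : (2 * Real.sqrt (Real.log 2) * Real.sqrt D + Real.sqrt (C - D * Real.log x)) * σ
        = (Real.sqrt n * σ) * σ := by
      have := heq
      unfold phiKS at this
      rw [this]; ring
    exact (mul_right_cancel₀ (ne_of_gt hσ0) h).symm
  have hsC : (0:ℝ) ≤ Real.sqrt (C - D * Real.log x) := Real.sqrt_nonneg _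
  have hσlow : 2 * Real.sqrt (Real.log 2) * Real.sqrt D ≤ Real.sqrt n * σ := by
    rw [heq']; linarith
  -- lower bound on log σ
  have hsn : (0:ℝ) < Real.sqrt n := Real.sqrt_pos.mpr hnpos
  have hsD : (0:ℝ) < Real.sqrt D := Real.sqrt_pos.mpr hDpos
  have hsl2 : (0:ℝ) < Real.sqrt (Real.log 2) := Real.sqrt_pos.mpr hlog2pos
  have hσ_ge : 2 * Real.sqrt (Real.log 2) * Real.sqrt D / Real.sqrt n ≤ σ :=
    (div_le_iff₀ hsn).mpr (by linarith [hσlow])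
  have hloglog2 : -Real.log 2 ≤ Real.log (Real.log 2) := by
    have h := Real.log_le_log (by norm_num : (0:ℝ) < 2⁻¹) (by linarith : (2:ℝ)⁻¹ ≤ Real.log 2)
    rwa [Real.log_inv] at h
  have hlogσ : -Real.log σ ≤ Real.log n / 2 - Real.log D / 2 := by
    have h1 : Real.log (2 * Real.sqrt (Real.log 2) * Real.sqrt D / Real.sqrt n) ≤ Real.log σ :=
      Real.log_le_log (by positivity) hσ_ge
    rw [Real.log_div (by positivity) (ne_of_gt hsn),
        Real.log_mul (by positivity) (ne_of_gt hsD),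
        Real.log_mul (by norm_num) (ne_of_gt hsl2),
        Real.log_sqrt hlog2pos.le, Real.log_sqrt hD0, Real.log_sqrt hnpos.le] at h1
    linarith
  -- exponential bound relating σ and x
  have hσexp : σ + 1 ≤ Real.exp (16 * (L:ℝ) * x) := by
    have h := eta_exp_bound hL η hcase x hx0 hx1
    rw [hxeq] at h
    exact h
  set y : ℝ := Real.log (σ + 1) with hydef
  have hy0 : (0:ℝ) < y := Real.log_pos (by linarith)
  have hyx : y ≤ 16 * (L:ℝ) * x := by
    have h := Real.log_le_log (by linarith) hσexp
    rwa [Real.log_exp] at h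
  have h16L : (0:ℝ) < 16 * (L:ℝ) := by linarith
  have hxy : y / (16 * (L:ℝ)) ≤ x := (div_le_iff₀ h16L).mpr (by linarith)
  have hlog16L : Real.log (16 * (L:ℝ)) = 4 * Real.log 2 + Real.log L := by
    rw [Real.log_mul (by norm_num) (by linarith), show (16:ℝ) = 2^4 by norm_num, Real.log_pow]
    push_cast; ring
  have hlogx : -Real.log x ≤ 4 * Real.log 2 + Real.log L - Real.log y := by
    have h1 : Real.log (y / (16 * (L:ℝ))) ≤ Real.log x :=
      Real.log_le_log (by positivity) hxy
    rw [Real.log_div (ne_of_gt hy0) (ne_of_gt h16L), hlog16L] at h1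
    linarith
  -- bound on log L - log y
  have hMy : Real.log L - Real.log y ≤ Real.log 2 + Mx := by
    rcases le_or_gt σ 1 with hσle | hσgt
    · -- σ ≤ 1 : use concavity to get y ≥ σ log 2
      have hconv : Real.exp (σ * Real.log 2) ≤ 1 + σ := by
        have h := convexOn_exp.2 (Set.mem_univ (Real.log 2)) (Set.mem_univ (0:ℝ))
          hσ0.le (by linarith : (0:ℝ) ≤ 1 - σ) (by ring)
        simp only [smul_eq_mul, mul_zero, add_zero, Real.exp_zero,
          Real.exp_log (by norm_num : (0:ℝ) < 2)] at h
        calc Real.exp (σ * Real.log 2) ≤ σ * 2 + (1 - σ) * 1 := h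
          _ = 1 + σ := by ring
      have hylb : σ * Real.log 2 ≤ y := by
        have h := Real.log_le_log (Real.exp_pos _) hconv
        rw [Real.log_exp] at h
        rw [hydef, add_comm σ 1]
        exact h
      have hylog : Real.log (σ * Real.log 2) ≤ Real.log y :=
        Real.log_le_log (by positivity) hylb
      rw [Real.log_mul (ne_of_gt hσ0) (ne_of_gt hlog2pos)] at hylog
      have hle : Real.log n / 2 + Real.log L / 2 ≤ Mx := le_max_left _ _
      have := hlogσ
      -- log y ≥ log σ + log log 2 ≥ log σ - log 2
      have h2 : Real.log σ - Real.log 2 ≤ Real.log y := by linarith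
      linarith
    · -- σ > 1 : y ≥ log 2
      have hylb : Real.log 2 ≤ y := Real.log_le_log (by norm_num) (by linarith)
      have hylog : Real.log (Real.log 2) ≤ Real.log y :=
        Real.log_le_log hlog2pos hylb
      have hle : Real.log 2 / 2 + Real.log L ≤ Mx := le_max_right _ _
      linarith
  have hlx : -Real.log x ≤ 5 * Real.log 2 + Mx := by linarith
  -- combine with the complexity bound
  have hC : C ≤ (5.5 * Real.log 2 + 1) * D := cks_le A hA K S hK1
  have hCD : C - D * Real.log x ≤ D * (10.5 * Real.log 2 + 1 + Mx) := by
    have h1 : D * (-Real.log x) ≤ D * (5 * Real.log 2 + Mx) :=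
      mul_le_mul_of_nonneg_left hlx hD0
    linarith
  have hMx0 : (0:ℝ) ≤ Mx := le_trans (by linarith) (le_max_right _ _)
  have hsqrtCD : Real.sqrt (C - D * Real.log x)
      ≤ Real.sqrt D * (Real.sqrt (10.5 * Real.log 2 + 1) + Real.sqrt Mx) := by
    calc Real.sqrt (C - D * Real.log x)
        ≤ Real.sqrt (D * (10.5 * Real.log 2 + 1 + Mx)) := Real.sqrt_le_sqrt hCD
      _ = Real.sqrt D * Real.sqrt (10.5 * Real.log 2 + 1 + Mx) := Real.sqrt_mul hD0 _
      _ ≤ Real.sqrt D * (Real.sqrt (10.5 * Real.log 2 + 1) + Real.sqrt Mx) :=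
          mul_le_mul_of_nonneg_left (sqrt_add_le' _ _) (Real.sqrt_nonneg D)
  set b : ℝ := 2 * Real.sqrt (Real.log 2) + Real.sqrt (10.5 * Real.log 2 + 1) with hbdef
  have hb0 : (0:ℝ) ≤ b := by positivity
  have hb : b ≤ 4.55 := by
    have t1 : Real.log 2 ≤ (0.8327:ℝ) ^ 2 := by norm_num; linarith
    have t2 : 10.5 * Real.log 2 + 1 ≤ (2.878:ℝ) ^ 2 := by norm_num; linarith
    have s1 : Real.sqrt (Real.log 2) ≤ 0.8327 := by
      calc Real.sqrt (Real.log 2) ≤ Real.sqrt ((0.8327:ℝ) ^ 2) := Real.sqrt_le_sqrt t1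
        _ = 0.8327 := Real.sqrt_sq (by norm_num)
    have s2 : Real.sqrt (10.5 * Real.log 2 + 1) ≤ 2.878 := by
      calc Real.sqrt (10.5 * Real.log 2 + 1) ≤ Real.sqrt ((2.878:ℝ) ^ 2) := Real.sqrt_le_sqrt t2
        _ = 2.878 := Real.sqrt_sq (by norm_num)
    rw [hbdef]; linarith
  have h1 : Real.sqrt n * σ ≤ Real.sqrt D * (b + Real.sqrt Mx) := by
    rw [heq', hbdef]
    have hexp : Real.sqrt D * (2 * Real.sqrt (Real.log 2)
          + Real.sqrt (10.5 * Real.log 2 + 1) + Real.sqrt Mx)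
        = 2 * Real.sqrt (Real.log 2) * Real.sqrt D
          + Real.sqrt D * (Real.sqrt (10.5 * Real.log 2 + 1) + Real.sqrt Mx) := by ring
    rw [hexp]
    linarith [hsqrtCD]
  have en : Real.sqrt n * Real.sqrt n = (n:ℝ) := Real.mul_self_sqrt hnpos.le
  have eD : Real.sqrt D * Real.sqrt D = D := Real.mul_self_sqrt hD0
  have hlhs0 : (0:ℝ) ≤ Real.sqrt n * σ := by positivity
  have hsq : (n:ℝ) * σ ^ 2 ≤ D * (b + Real.sqrt Mx) ^ 2 := by
    have h2 := mul_self_le_mul_self hlhs0 h1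
    have e1 : (Real.sqrt n * σ) * (Real.sqrt n * σ) = (n:ℝ) * σ ^ 2 := by
      rw [show (Real.sqrt (n:ℝ) * σ) * (Real.sqrt (n:ℝ) * σ)
          = (Real.sqrt (n:ℝ) * Real.sqrt (n:ℝ)) * σ ^ 2 from by ring, en]
    have e2 : (Real.sqrt D * (b + Real.sqrt Mx)) * (Real.sqrt D * (b + Real.sqrt Mx))
        = D * (b + Real.sqrt Mx) ^ 2 := by
      rw [show (Real.sqrt D * (b + Real.sqrt Mx)) * (Real.sqrt D * (b + Real.sqrt Mx))
          = (Real.sqrt D * Real.sqrt D) * (b + Real.sqrt Mx) ^ 2 from by ring, eD]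
    rw [← e1, ← e2]; exact h2
  have hfinal : (b + Real.sqrt Mx) ^ 2 + Real.log 2 ≤ (5 + Real.sqrt Mx) ^ 2 :=
    final_numeric b (Real.sqrt Mx) (Real.log 2) hb0 hb (Real.sqrt_nonneg Mx) (by linarith)
  have hσ2 : σ ^ 2 ≤ D * (b + Real.sqrt Mx) ^ 2 / n := by
    rw [le_div_iff₀ hnpos]; linarith [hsq]
  calc σ ^ 2 + Real.log 2 * D / n
      ≤ D * (b + Real.sqrt Mx) ^ 2 / n + Real.log 2 * D / n := by linarith
    _ = (D / n) * ((b + Real.sqrt Mx) ^ 2 + Real.log 2) := by ring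
    _ ≤ (D / n) * (5 + Real.sqrt Mx) ^ 2 :=
        mul_le_mul_of_nonneg_left hfinal (by positivity)

end
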